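/- Let B be a C*-algebra and A a closed *-subalgebra satisfying the ideal intersection property and axiom (inv). Then the map α : J ↦ J ∩ A is a bijection from the set of regular ideals of B onto the set of regular B-invariant ideals of A, with inverse β : I ↦ Ann_B(Ann_B(I)). Moreover α and β preserve inclusion. -/

import Mathlib

open Pointwise

variable {B : Type*} [NonUnitalCStarAlgebra B]

/-- Closed linear span of a subset of `B`. -/
def clSpan (S : Set B) : Set B := closure (Submodule.span ℂ S : Set B)

/-- `S` is `B`-invariant if `[SB] = [BS]`. -/
def BInvariant (S : Set B) : Prop :=
  clSpan (S * (Set.univ : Set B)) = clSpan ((Set.univ : Set B) * S)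

/-- The closed two-sided ideal of `B` generated by `S`, namely `[BSB]`. -/
def idealGen (S : Set B) : Set B :=
  clSpan ((Set.univ : Set B) * S * (Set.univ : Set B))

/-- Two-sided annihilator of `S` computed in `B`. -/
def annB (S : Set B) : Set B := {x | ∀ s ∈ S, x * s = 0 ∧ s * x = 0}

/-- Two-sided annihilator of `S` computed inside the subset `A ⊆ B`. -/
def annIn (A S : Set B) : Set B := {x ∈ A | ∀ s ∈ S, x * s = 0 ∧ s * x = 0}

/-- A closed *-subalgebra of `B`, regarded as a subset. -/
structure ClosedStarSubalgebra (A : Set B) : Prop where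
  isClosed : IsClosed A
  zero_mem : (0 : B) ∈ A
  add_mem : ∀ ⦃x y : B⦄, x ∈ A → y ∈ A → x + y ∈ A
  smul_mem : ∀ (c : ℂ) ⦃x : B⦄, x ∈ A → c • x ∈ A
  mul_mem : ∀ ⦃x y : B⦄, x ∈ A → y ∈ A → x * y ∈ A
  star_mem : ∀ ⦃x : B⦄, x ∈ A → star x ∈ A

/-- A norm-closed two-sided ideal of `B`. -/
structure ClosedTwoSidedIdeal (J : Set B) : Prop where
  isClosed : IsClosed J
  zero_mem : (0 : B) ∈ J
  add_mem : ∀ ⦃x y : B⦄, x ∈ J → y ∈ J → x + y ∈ J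
  smul_mem : ∀ (c : ℂ) ⦃x : B⦄, x ∈ J → c • x ∈ J
  mul_mem_left : ∀ (a : B) ⦃x : B⦄, x ∈ J → a * x ∈ J
  mul_mem_right : ∀ (a : B) ⦃x : B⦄, x ∈ J → x * a ∈ J

/-- A norm-closed two-sided ideal of the subalgebra `A ⊆ B`. -/
structure IdealOf (A J : Set B) : Prop where
  subset : J ⊆ A
  isClosed : IsClosed J
  zero_mem : (0 : B) ∈ J
  add_mem : ∀ ⦃x y : B⦄, x ∈ J → y ∈ J → x + y ∈ J
  smul_mem : ∀ (c : ℂ) ⦃x : B⦄, x ∈ J → c • x ∈ J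
  mul_mem_left : ∀ ⦃a : B⦄, a ∈ A → ∀ ⦃x : B⦄, x ∈ J → a * x ∈ J
  mul_mem_right : ∀ ⦃a : B⦄, a ∈ A → ∀ ⦃x : B⦄, x ∈ J → x * a ∈ J

/-- The ideal intersection property: every nonzero closed two-sided ideal of `B`
meets `A` nontrivially. -/
def IdealIntersectionProperty (A : Set B) : Prop :=
  ∀ J : Set B, ClosedTwoSidedIdeal J → J ≠ {0} → J ∩ A ≠ {0}

/-- Axiom (inv): `J ∩ A` is `B`-invariant for every closed two-sided ideal `J` of `B`. -/
def AxiomInv (A : Set B) : Prop :=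
  ∀ J : Set B, ClosedTwoSidedIdeal J → BInvariant (J ∩ A)

/-- A regular ideal of `B`. -/
def RegularIdealB (J : Set B) : Prop :=
  ClosedTwoSidedIdeal J ∧ annB (annB J) = J

/-- A regular ideal of the subalgebra `A`. -/
def RegularIdealIn (A I : Set B) : Prop :=
  IdealOf A I ∧ annIn A (annIn A I) = I

/-- A normalizer of `A` in `B`. -/
def IsNormalizer (A : Set B) (n : B) : Prop :=
  (∀ a ∈ A, star n * a * n ∈ A) ∧ (∀ a ∈ A, n * a * star n ∈ A)

/-- `A` contains an approximate unit for `B`. -/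
def ContainsApproxUnit (A : Set B) : Prop :=
  ∃ (ι : Type) (l : Filter ι) (e : ι → B), l.NeBot ∧ (∀ i, e i ∈ A) ∧
    ∀ b : B, Filter.Tendsto (fun i => e i * b) l (nhds b) ∧
      Filter.Tendsto (fun i => b * e i) l (nhds b)

/-- `A` is a regular subalgebra of `B`: the normalizers span a dense subspace of
`B` and `A` contains an approximate unit for `B`. -/
def RegularSubalgebra (A : Set B) : Prop :=
  ClosedStarSubalgebra A ∧ clSpan {n : B | IsNormalizer A n} = Set.univ ∧
    ContainsApproxUnit A


/-! ### Auxiliary lemmas -/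

section Aux

lemma annB_anti {S T : Set B} (h : S ⊆ T) : annB T ⊆ annB S :=
  fun x hx s hs => hx s (h hs)

lemma subset_annB_annB (S : Set B) : S ⊆ annB (annB S) :=
  fun s hs x hx => ⟨(hx s hs).2, (hx s hs).1⟩

lemma annB_annB_annB (S : Set B) : annB (annB (annB S)) = annB S :=
  Set.Subset.antisymm (annB_anti (subset_annB_annB S)) (subset_annB_annB (annB S))

lemma annB_isClosed (S : Set B) : IsClosed (annB S) := by
  have : annB S = ⋂ s ∈ S, ({x : B | x * s = 0} ∩ {x : B | s * x = 0}) := by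
    ext x
    simp only [annB, Set.mem_setOf_eq, Set.mem_iInter, Set.mem_inter_iff]
  rw [this]
  refine isClosed_biInter fun s _ => IsClosed.inter ?_ ?_
  · exact isClosed_eq (continuous_id.mul continuous_const) continuous_const
  · exact isClosed_eq (continuous_const.mul continuous_id) continuous_const

lemma annB_zero_mem (S : Set B) : (0 : B) ∈ annB S := fun s _ => by simp

lemma annB_add_mem {S : Set B} {x y : B} (hx : x ∈ annB S) (hy : y ∈ annB S) :
    x + y ∈ annB S := fun s hs => by
  obtain ⟨h1, h2⟩ := hx s hs
  obtain ⟨h3, h4⟩ := hy s hs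
  constructor
  · rw [add_mul, h1, h3, add_zero]
  · rw [mul_add, h2, h4, add_zero]

lemma annB_smul_mem {S : Set B} (c : ℂ) {x : B} (hx : x ∈ annB S) :
    c • x ∈ annB S := fun s hs => by
  obtain ⟨h1, h2⟩ := hx s hs
  constructor
  · rw [smul_mul_assoc, h1, smul_zero]
  · rw [mul_smul_comm, h2, smul_zero]

lemma clSpan_mul_right_zero {S : Set B} {x : B} (h : ∀ s ∈ S, s * x = 0) :
    ∀ t ∈ clSpan S, t * x = 0 := by
  intro t ht
  have hC : IsClosed {t : B | t * x = 0} :=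
    isClosed_eq (continuous_id.mul continuous_const) continuous_const
  have hspan : (Submodule.span ℂ S : Set B) ⊆ {t : B | t * x = 0} := by
    let K : Submodule ℂ B :=
      { carrier := {t : B | t * x = 0}
        add_mem' := fun {a b} ha hb => by
          simp only [Set.mem_setOf_eq] at *
          rw [add_mul, ha, hb, add_zero]
        zero_mem' := by simp
        smul_mem' := fun c a ha => by
          simp only [Set.mem_setOf_eq] at *
          rw [smul_mul_assoc, ha, smul_zero] }
    exact Submodule.span_le (p := K) |>.mpr h
  exact hC.closure_subset_iff.mpr hspan ht

lemma clSpan_mul_left_zero {S : Set B} {x : B} (h : ∀ s ∈ S, x * s = 0) :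
    ∀ t ∈ clSpan S, x * t = 0 := by
  intro t ht
  have hC : IsClosed {t : B | x * t = 0} :=
    isClosed_eq (continuous_const.mul continuous_id) continuous_const
  have hspan : (Submodule.span ℂ S : Set B) ⊆ {t : B | x * t = 0} := by
    let K : Submodule ℂ B :=
      { carrier := {t : B | x * t = 0}
        add_mem' := fun {a b} ha hb => by
          simp only [Set.mem_setOf_eq] at *
          rw [mul_add, ha, hb, add_zero]
        zero_mem' := by simp
        smul_mem' := fun c a ha => by
          simp only [Set.mem_setOf_eq] at *
          rw [mul_smul_comm, ha, smul_zero] }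
    exact Submodule.span_le (p := K) |>.mpr h
  exact hC.closure_subset_iff.mpr hspan ht

lemma subset_clSpan (S : Set B) : S ⊆ clSpan S :=
  fun s hs => subset_closure (Submodule.subset_span hs)

/-- If `I` is `B`-invariant then its two-sided annihilator is a closed two-sided
ideal of `B`. -/
lemma annB_ideal_of_inv {I : Set B} (hI : BInvariant I) :
    ClosedTwoSidedIdeal (annB I) := by
  refine ⟨annB_isClosed I, annB_zero_mem I, fun x y hx hy => annB_add_mem hx hy,
    fun c x hx => annB_smul_mem c hx, ?_, ?_⟩
  · intro a x hx s hs
    constructor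
    · rw [mul_assoc, (hx s hs).1, mul_zero]
    · have hsa : s * a ∈ clSpan (I * (Set.univ : Set B)) :=
        subset_clSpan _ (Set.mul_mem_mul hs (Set.mem_univ a))
      rw [hI] at hsa
      have hkill : ∀ t ∈ (Set.univ : Set B) * I, t * x = 0 := by
        rintro t ht
        rw [Set.mem_mul] at ht
        obtain ⟨b, -, s', hs', rfl⟩ := ht
        rw [mul_assoc, (hx s' hs').2, mul_zero]
      rw [← mul_assoc]
      exact clSpan_mul_right_zero hkill _ hsa
  · intro a x hx s hs
    constructor
    · have has : a * s ∈ clSpan ((Set.univ : Set B) * I) :=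
        subset_clSpan _ (Set.mul_mem_mul (Set.mem_univ a) hs)
      rw [← hI] at has
      have hkill : ∀ t ∈ I * (Set.univ : Set B), x * t = 0 := by
        rintro t ht
        rw [Set.mem_mul] at ht
        obtain ⟨s', hs', b, -, rfl⟩ := ht
        rw [← mul_assoc, (hx s' hs').1, zero_mul]
      rw [mul_assoc]
      exact clSpan_mul_left_zero hkill _ has
    · rw [← mul_assoc, (hx s hs).2, zero_mul]

/-- The two-sided annihilator of a closed two-sided ideal is a closed two-sided
ideal. -/
lemma annB_ideal_of_ideal {J : Set B} (hJ : ClosedTwoSidedIdeal J) :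
    ClosedTwoSidedIdeal (annB J) := by
  refine ⟨annB_isClosed J, annB_zero_mem J, fun x y hx hy => annB_add_mem hx hy,
    fun c x hx => annB_smul_mem c hx, ?_, ?_⟩
  · intro a x hx s hs
    refine ⟨by rw [mul_assoc, (hx s hs).1, mul_zero], ?_⟩
    rw [← mul_assoc]
    exact (hx (s * a) (hJ.mul_mem_right a hs)).2
  · intro a x hx s hs
    refine ⟨?_, by rw [← mul_assoc, (hx s hs).2, zero_mul]⟩
    rw [mul_assoc]
    exact (hx (a * s) (hJ.mul_mem_left a hs)).1

lemma ClosedTwoSidedIdeal.inter {J K : Set B} (hJ : ClosedTwoSidedIdeal J)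
    (hK : ClosedTwoSidedIdeal K) : ClosedTwoSidedIdeal (J ∩ K) :=
  ⟨hJ.isClosed.inter hK.isClosed, ⟨hJ.zero_mem, hK.zero_mem⟩,
    fun _ _ hx hy => ⟨hJ.add_mem hx.1 hy.1, hK.add_mem hx.2 hy.2⟩,
    fun c _ hx => ⟨hJ.smul_mem c hx.1, hK.smul_mem c hx.2⟩,
    fun a _ hx => ⟨hJ.mul_mem_left a hx.1, hK.mul_mem_left a hx.2⟩,
    fun a _ hx => ⟨hJ.mul_mem_right a hx.1, hK.mul_mem_right a hx.2⟩⟩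

lemma annIn_eq (A S : Set B) : annIn A S = A ∩ annB S := rfl

/-- Closed two-sided ideals in a C*-algebra are star-closed. -/
lemma star_mem_closed_ideal {J : Set B} (hJ : ClosedTwoSidedIdeal J) {x : B}
    (hx : x ∈ J) : star x ∈ J := by
  have hcl : star x ∈ closure J → star x ∈ J := fun h => by
    rwa [hJ.isClosed.closure_eq] at h
  apply hcl
  rw [Metric.mem_closure_iff]
  intro ε hε
  obtain ⟨c, hc, hcε⟩ : ∃ c : ℝ, 0 < c ∧ (2 * c)⁻¹ < ε ^ 2 := by
    refine ⟨ε⁻¹ ^ 2, by positivity, ?_⟩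
    have h1 : (2 * ε⁻¹ ^ 2)⁻¹ = ε ^ 2 / 2 := by
      field_simp
    rw [h1]
    have : (0 : ℝ) < ε ^ 2 := by positivity
    linarith
  set p : B := star x * x with hp
  have hpJ : p ∈ J := hJ.mul_mem_left (star x) hx
  have hpsa : IsSelfAdjoint p := IsSelfAdjoint.star_mul_self x
  set f : ℝ → ℝ := fun t => c ^ 2 * t ^ 2 / (c ^ 2 * t ^ 2 + 1) with hf_def
  set h : ℝ → ℝ := fun t => c ^ 2 * t / (c ^ 2 * t ^ 2 + 1) with hh_def
  have hden : ∀ t : ℝ, c ^ 2 * t ^ 2 + 1 ≠ 0 := fun t => by positivity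
  have hfC : ContinuousOn f (quasispectrum ℝ p) := Continuous.continuousOn <| by
    exact Continuous.div (by fun_prop) (by fun_prop) hden
  have hhC : ContinuousOn h (quasispectrum ℝ p) := Continuous.continuousOn <| by
    exact Continuous.div (by fun_prop) (by fun_prop) hden
  have hf0 : f 0 = 0 := by simp [hf_def]
  have hh0 : h 0 = 0 := by simp [hh_def]
  have hidC : ContinuousOn (fun t : ℝ => t) (quasispectrum ℝ p) := continuousOn_id
  set F : B := cfcₙ f p with hF_def
  have hFJ : F ∈ J := by
    have hfh : f = fun t => (fun t : ℝ => t) t * h t := by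
      funext t
      have h0 := hden t
      simp only [hf_def, hh_def]
      field_simp
    have : F = p * cfcₙ h p := by
      rw [hF_def, hfh, cfcₙ_mul _ _ p hidC (by simp) hhC hh0, cfcₙ_id' ℝ p hpsa]
    rw [this]
    exact hJ.mul_mem_right _ hpJ
  have hFsa : IsSelfAdjoint F := cfcₙ_predicate f p
  set j : B := F * star x with hj_def
  have hjJ : j ∈ J := hJ.mul_mem_right (star x) hFJ
  refine ⟨j, hjJ, ?_⟩
  set a : B := star x - j with ha_def
  have hstar_a : star a = x - x * F := by
    rw [ha_def, hj_def, star_sub, star_star, star_mul, star_star, hFsa.star_eq]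
  -- the cfc computation
  have hidf : cfcₙ (fun t : ℝ => t * f t) p = p * F := by
    rw [cfcₙ_mul _ _ p hidC (by simp) hfC hf0, cfcₙ_id' ℝ p hpsa]
  have hfid : cfcₙ (fun t : ℝ => f t * t) p = F * p := by
    rw [cfcₙ_mul _ _ p hfC hf0 hidC (by simp), cfcₙ_id' ℝ p hpsa]
  have hC1 : ContinuousOn (fun t : ℝ => t * f t) (quasispectrum ℝ p) := hidC.mul hfC
  have hC2 : ContinuousOn (fun t : ℝ => f t * t) (quasispectrum ℝ p) := hfC.mul hidC
  have hC3 : ContinuousOn (fun t : ℝ => f t * (t * f t)) (quasispectrum ℝ p) := hfC.mul hC1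
  have hC4 : ContinuousOn (fun t : ℝ => t - t * f t) (quasispectrum ℝ p) := hidC.sub hC1
  have hC5 : ContinuousOn (fun t : ℝ => f t * t - f t * (t * f t)) (quasispectrum ℝ p) :=
    hC2.sub hC3
  have hfidf : cfcₙ (fun t : ℝ => f t * (t * f t)) p = F * (p * F) := by
    rw [cfcₙ_mul _ _ p hfC hf0 hC1 (by simp [hf0]), hidf]
  have h4 : cfcₙ (fun t : ℝ => t - t * f t) p = p - p * F := by
    rw [cfcₙ_sub _ _ p hidC (by simp) hC1 (by simp [hf0]), cfcₙ_id' ℝ p hpsa, hidf]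
  have h5 : cfcₙ (fun t : ℝ => f t * t - f t * (t * f t)) p = F * p - F * (p * F) := by
    rw [cfcₙ_sub _ _ p hC2 (by simp [hf0]) hC3 (by simp [hf0]), hfid, hfidf]
  have h6 : cfcₙ (fun t : ℝ => (t - t * f t) - (f t * t - f t * (t * f t))) p
      = (p - p * F) - (F * p - F * (p * F)) := by
    rw [cfcₙ_sub _ _ p hC4 (by simp [hf0]) hC5 (by simp [hf0]), h4, h5]
  have hprod : a * star a = cfcₙ (fun t : ℝ => (t - t * f t) - (f t * t - f t * (t * f t))) p := by
    rw [h6, hstar_a, ha_def, hj_def, hp]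
    noncomm_ring
  have hbound : ‖a * star a‖ ≤ (2 * c)⁻¹ := by
    rw [hprod]
    apply norm_cfcₙ_le
    intro t _
    have hd : (0 : ℝ) < c ^ 2 * t ^ 2 + 1 := by positivity
    have hgt : (t - t * f t) - (f t * t - f t * (t * f t)) = t * (1 - f t) ^ 2 := by ring
    have hone : (1 : ℝ) - f t = (c ^ 2 * t ^ 2 + 1)⁻¹ := by
      rw [hf_def]
      field_simp
      ring
    rw [hgt, hone, Real.norm_eq_abs, abs_mul, abs_pow, abs_inv, abs_of_pos hd]
    have key : 2 * c * |t| ≤ (c ^ 2 * t ^ 2 + 1) ^ 2 := by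
      nlinarith [sq_nonneg (c * |t| - 1), sq_abs t, abs_nonneg t, sq_nonneg (c ^ 2 * t ^ 2),
        sq_nonneg (c ^ 2 * t ^ 2 + 1)]
    rw [inv_pow, mul_inv_le_iff₀ (by positivity), inv_mul_eq_div,
      le_div_iff₀ (by positivity)]
    linarith [key]
  have hnorm : ‖a‖ * ‖a‖ ≤ (2 * c)⁻¹ := by
    rw [← CStarRing.norm_self_mul_star]
    exact hbound
  have : dist (star x) j = ‖a‖ := by rw [dist_eq_norm, ha_def]
  rw [this]
  nlinarith [norm_nonneg a, hε]

end Aux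

section Main

variable {A : Set B}

/-- Key step: `β (α J) = J` for regular ideals `J` of `B`. -/
lemma key3 (hA : ClosedStarSubalgebra A) (hiip : IdealIntersectionProperty A)
    (hinv : AxiomInv A) {J : Set B} (hJ : RegularIdealB J) :
    annB (annB (J ∩ A)) = J := by
  obtain ⟨hJi, hJr⟩ := hJ
  set D : Set B := annB (J ∩ A) with hD_def
  have hDideal : ClosedTwoSidedIdeal D := annB_ideal_of_inv (hinv J hJi)
  apply Set.Subset.antisymm
  · calc annB D ⊆ annB (annB J) := annB_anti (annB_anti Set.inter_subset_left)
      _ = J := hJr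
  · -- `J ⊆ annB D`
    have hDJ : D ∩ J = {0} := by
      by_contra hne
      apply hiip (D ∩ J) (hDideal.inter hJi) hne
      ext y
      simp only [Set.mem_inter_iff, Set.mem_singleton_iff]
      constructor
      · rintro ⟨⟨hyD, hyJ⟩, hyA⟩
        have hyJA : star y ∈ J ∩ A := ⟨star_mem_closed_ideal hJi hyJ, hA.star_mem hyA⟩
        have hzero : y * star y = 0 := (hyD (star y) hyJA).1
        have hn : ‖y‖ * ‖y‖ = 0 := by
          rw [← CStarRing.norm_self_mul_star, hzero, norm_zero]
        have : ‖y‖ = 0 := by nlinarith [norm_nonneg y]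
        exact norm_eq_zero.mp this
      · rintro rfl
        exact ⟨⟨annB_zero_mem _, hJi.zero_mem⟩, hA.zero_mem⟩
    intro jel hj d hd
    constructor
    · have : jel * d ∈ D ∩ J := ⟨hDideal.mul_mem_left jel hd, hJi.mul_mem_right d hj⟩
      rwa [hDJ, Set.mem_singleton_iff] at this
    · have : d * jel ∈ D ∩ J := ⟨hDideal.mul_mem_right jel hd, hJi.mul_mem_left d hj⟩
      rwa [hDJ, Set.mem_singleton_iff] at this

end Main

/-- Main theorem: under the ideal intersection property and axiom (inv), the map
`α : J ↦ J ∩ A` is a bijection from the regular ideals of `B` onto the regular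
`B`-invariant ideals of `A`, with inverse `β : I ↦ Ann_B(Ann_B(I))`; both maps
preserve inclusion. -/
theorem stmt13 (A : Set B) (hA : ClosedStarSubalgebra A)
    (hiip : IdealIntersectionProperty A) (hinv : AxiomInv A) :
    (∀ J : Set B, RegularIdealB J → RegularIdealIn A (J ∩ A) ∧ BInvariant (J ∩ A)) ∧
    (∀ I : Set B, RegularIdealIn A I → BInvariant I → RegularIdealB (annB (annB I))) ∧
    (∀ J : Set B, RegularIdealB J → annB (annB (J ∩ A)) = J) ∧
    (∀ I : Set B, RegularIdealIn A I → BInvariant I → annB (annB I) ∩ A = I) ∧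
    (∀ J₁ J₂ : Set B, RegularIdealB J₁ → RegularIdealB J₂ → J₁ ⊆ J₂ →
      J₁ ∩ A ⊆ J₂ ∩ A) ∧
    (∀ I₁ I₂ : Set B, RegularIdealIn A I₁ → BInvariant I₁ →
      RegularIdealIn A I₂ → BInvariant I₂ → I₁ ⊆ I₂ →
      annB (annB I₁) ⊆ annB (annB I₂)) := by
  refine ⟨?_, ?_, fun J hJ => key3 hA hiip hinv hJ, ?_, ?_, ?_⟩
  · -- α maps regular ideals to regular invariant ideals
    intro J hJ
    have hJi := hJ.1
    have hBinv : BInvariant (J ∩ A) := hinv J hJi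
    refine ⟨⟨?_, ?_⟩, hBinv⟩
    · exact
        { subset := Set.inter_subset_right
          isClosed := hJi.isClosed.inter hA.isClosed
          zero_mem := ⟨hJi.zero_mem, hA.zero_mem⟩
          add_mem := fun x y hx hy => ⟨hJi.add_mem hx.1 hy.1, hA.add_mem hx.2 hy.2⟩
          smul_mem := fun c x hx => ⟨hJi.smul_mem c hx.1, hA.smul_mem c hx.2⟩
          mul_mem_left := fun a ha x hx => ⟨hJi.mul_mem_left a hx.1, hA.mul_mem ha hx.2⟩
          mul_mem_right := fun a ha x hx => ⟨hJi.mul_mem_right a hx.1, hA.mul_mem hx.2 ha⟩ }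
    · -- regularity inside A
      set D : Set B := annB (J ∩ A) with hD_def
      have hDideal : ClosedTwoSidedIdeal D := annB_ideal_of_inv hBinv
      have hDreg : RegularIdealB D := ⟨hDideal, annB_annB_annB (J ∩ A)⟩
      have hkeyD : annB (annB (D ∩ A)) = D := key3 hA hiip hinv hDreg
      have hkeyJ : annB D = J := key3 hA hiip hinv hJ
      apply Set.Subset.antisymm
      · rintro x ⟨hxA, hxkill⟩
        have hxann : x ∈ annB (D ∩ A) := by
          intro d hd
          exact hxkill d ⟨hd.2, hd.1⟩
        refine ⟨?_, hxA⟩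
        rw [← hkeyJ]
        intro d hd
        have hd' : d ∈ annB (annB (D ∩ A)) := by rw [hkeyD]; exact hd
        exact ⟨(hd' x hxann).2, (hd' x hxann).1⟩
      · rintro s ⟨hsJ, hsA⟩
        refine ⟨hsA, ?_⟩
        rintro y ⟨-, hykill⟩
        exact ⟨(hykill s ⟨hsJ, hsA⟩).2, (hykill s ⟨hsJ, hsA⟩).1⟩
  · -- β maps regular invariant ideals of A to regular ideals of B
    intro I hI hIinv
    have h1 : ClosedTwoSidedIdeal (annB I) := annB_ideal_of_inv hIinv
    exact ⟨annB_ideal_of_ideal h1, annB_annB_annB (annB I)⟩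
  · -- β ∘ α = id on the A side
    intro I hI hIinv
    apply Set.Subset.antisymm
    · rintro x ⟨hxann, hxA⟩
      rw [← hI.2]
      refine ⟨hxA, ?_⟩
      rintro y ⟨-, hykill⟩
      exact hxann y hykill
    · exact fun s hs => ⟨subset_annB_annB I hs, hI.1.subset hs⟩
  · -- α preserves inclusion
    intro J₁ J₂ _ _ h x hx
    exact ⟨h hx.1, hx.2⟩
  · -- β preserves inclusion
    intro I₁ I₂ _ _ _ _ h
    exact annB_anti (annB_anti h)
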